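/- Let n = 2k and let M = m_1·(E_1∧E_n) + m_2·(E_2∧E_{n−1}) + ⋯ + m_k·(E_k∧E_{k+1}) ∈ so(n, ℂ), where m_1,…,m_k ∈ ℂ are nonzero with m_i² pairwise distinct. Then the centralizer of M in so(n, ℂ), namely {ξ ∈ so(n,ℂ) : [ξ, M] = 0}, is exactly the k-dimensional linear span of E_1∧E_n, E_2∧E_{n−1}, …, E_k∧E_{k+1}; in particular M is a regular element of so(n,ℂ). -/

import Mathlib

open Matrix

/-- `E_i ∧ E_j = E_i E_jᵀ − E_j E_iᵀ`, the elementary skew-symmetric matrix. -/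
noncomputable def wedge {n : ℕ} (i j : Fin n) : Matrix (Fin n) (Fin n) ℂ :=
  Matrix.single i j 1 - Matrix.single j i 1

/-- The anti-diagonal basis element `E_i ∧ E_{n+1−i}` of `so(2k, ℂ)` (zero-based:
`E_i ∧ E_{2k−1−i}` for `i = 0, …, k−1`). -/
noncomputable def antidiagWedge (k : ℕ) (i : Fin k) :
    Matrix (Fin (2 * k)) (Fin (2 * k)) ℂ :=
  wedge ⟨i, by omega⟩ ⟨2 * k - 1 - i, by omega⟩

namespace AntidiagAux

variable {k : ℕ}

/-- the partner index -/
def sg (a : Fin (2 * k)) : Fin (2 * k) := ⟨2 * k - 1 - a, by have := a.isLt; omega⟩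

lemma sg_sg (a : Fin (2 * k)) : sg (sg a) = a := by
  have := a.isLt
  rw [Fin.ext_iff]
  simp [sg]
  omega

/-- coefficient extraction -/
noncomputable def cc (g : Fin k → ℂ) (a : Fin (2 * k)) : ℂ :=
  if h : (a : ℕ) < k then g ⟨a, h⟩
  else -g ⟨2 * k - 1 - a, by have := a.isLt; omega⟩

lemma cc_sg (g : Fin k → ℂ) (a : Fin (2 * k)) : cc g (sg a) = -cc g a := by
  have ha := a.isLt
  unfold cc
  split_ifs with h1 h2 h2
  · simp only [sg] at h1; omega
  · rw [neg_neg]; rfl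
  · exact neg_inj.mpr (congrArg g (Fin.ext (by simp [sg]; omega)))
  · simp only [sg] at h1; omega

lemma cc_ne (m : Fin k → ℂ) (hm : ∀ i, m i ≠ 0) (a : Fin (2 * k)) : cc m a ≠ 0 := by
  simp only [cc]
  split_ifs
  · exact hm _
  · exact neg_ne_zero.mpr (hm _)

lemma cc_sq_eq (m : Fin k → ℂ) (hm2 : Function.Injective fun i => m i ^ 2)
    {a b : Fin (2 * k)} (h : cc m a ^ 2 = cc m b ^ 2) :
    (b : ℕ) = a ∨ (b : ℕ) = 2 * k - 1 - (a : ℕ) := by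
  have ha := a.isLt; have hb := b.isLt
  simp only [cc] at h
  split_ifs at h with h1 h2 h2
  · have h3 := hm2 h
    rw [Fin.mk.injEq] at h3
    omega
  · rw [neg_sq] at h
    have h3 := hm2 h
    rw [Fin.mk.injEq] at h3
    omega
  · rw [neg_sq] at h
    have h3 := hm2 h
    rw [Fin.mk.injEq] at h3
    omega
  · rw [neg_sq, neg_sq] at h
    have h3 := hm2 h
    rw [Fin.mk.injEq] at h3
    omega

lemma aw_apply (i : Fin k) (a b : Fin (2 * k)) :
    antidiagWedge k i a b =
      (if (i : ℕ) = (a : ℕ) ∧ 2 * k - 1 - (i : ℕ) = (b : ℕ) then (1 : ℂ) else 0)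
        - (if 2 * k - 1 - (i : ℕ) = (a : ℕ) ∧ (i : ℕ) = (b : ℕ) then (1 : ℂ) else 0) := by
  simp [antidiagWedge, wedge, Matrix.single, Fin.ext_iff]

lemma sum_aw_apply (g : Fin k → ℂ) (a b : Fin (2 * k)) :
    (∑ i, g i • antidiagWedge k i) a b =
      if (b : ℕ) = 2 * k - 1 - (a : ℕ) then cc g a else 0 := by
  have ha := a.isLt; have hb := b.isLt
  rw [Matrix.sum_apply]
  by_cases hak : (a : ℕ) < k
  · rw [Finset.sum_eq_single ⟨(a : ℕ), hak⟩]
    · simp only [Matrix.smul_apply, aw_apply, smul_eq_mul, cc, dif_pos hak, Fin.val_mk, true_and]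
      split_ifs <;> first | ring1 | (exfalso; omega)
    · intro i _ hi
      have hi' : (i : ℕ) ≠ (a : ℕ) := by simpa [Fin.ext_iff] using hi
      have hik := i.isLt
      simp only [Matrix.smul_apply, aw_apply, smul_eq_mul]
      split_ifs <;> first | ring1 | (exfalso; omega)
    · intro h; exact absurd (Finset.mem_univ _) h
  · rw [Finset.sum_eq_single ⟨2 * k - 1 - (a : ℕ), by omega⟩]
    · simp only [Matrix.smul_apply, aw_apply, smul_eq_mul, cc, dif_neg hak, Fin.val_mk, true_and]
      split_ifs <;> first | ring1 | (exfalso; omega)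
    · intro i _ hi
      have hi' : (i : ℕ) ≠ 2 * k - 1 - (a : ℕ) := by simpa [Fin.ext_iff] using hi
      have hik := i.isLt
      simp only [Matrix.smul_apply, aw_apply, smul_eq_mul]
      split_ifs <;> first | ring1 | (exfalso; omega)
    · intro h; exact absurd (Finset.mem_univ _) h

lemma mul_M_apply (g : Fin k → ℂ) (ξ : Matrix (Fin (2 * k)) (Fin (2 * k)) ℂ)
    (a b : Fin (2 * k)) :
    (ξ * ∑ i, g i • antidiagWedge k i) a b = ξ a (sg b) * cc g (sg b) := by
  have hb := b.isLt
  rw [Matrix.mul_apply, Finset.sum_eq_single (sg b)]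
  · rw [sum_aw_apply, if_pos (by simp [sg]; omega)]
  · intro j _ hj
    have hj' : (j : ℕ) ≠ 2 * k - 1 - (b : ℕ) := by simpa [Fin.ext_iff, sg] using hj
    have := j.isLt
    rw [sum_aw_apply, if_neg (by omega), mul_zero]
  · intro h; exact absurd (Finset.mem_univ _) h

lemma M_mul_apply (g : Fin k → ℂ) (ξ : Matrix (Fin (2 * k)) (Fin (2 * k)) ℂ)
    (a b : Fin (2 * k)) :
    ((∑ i, g i • antidiagWedge k i) * ξ) a b = cc g a * ξ (sg a) b := by
  have ha := a.isLt
  rw [Matrix.mul_apply, Finset.sum_eq_single (sg a)]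
  · rw [sum_aw_apply, if_pos (by simp [sg])]
  · intro j _ hj
    have hj' : (j : ℕ) ≠ 2 * k - 1 - (a : ℕ) := by simpa [Fin.ext_iff, sg] using hj
    have := j.isLt
    rw [sum_aw_apply, if_neg (by omega), zero_mul]
  · intro h; exact absurd (Finset.mem_univ _) h

lemma aw_transpose (i : Fin k) : (antidiagWedge k i)ᵀ = -antidiagWedge k i := by
  ext a b
  have hi := i.isLt; have ha := a.isLt; have hb := b.isLt
  simp only [Matrix.transpose_apply, Matrix.neg_apply, aw_apply]
  split_ifs <;> first | ring1 | (exfalso; omega)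

lemma aw_mul_of_ne {p q : Fin k} (hpq : (p : ℕ) ≠ (q : ℕ)) :
    antidiagWedge k p * antidiagWedge k q = 0 := by
  have hp := p.isLt; have hq := q.isLt
  have hA : (⟨2 * k - 1 - (p : ℕ), by omega⟩ : Fin (2 * k)) ≠ ⟨(q : ℕ), by omega⟩ := by
    simp only [ne_eq, Fin.mk.injEq]; omega
  have hB : (⟨2 * k - 1 - (p : ℕ), by omega⟩ : Fin (2 * k)) ≠ ⟨2 * k - 1 - (q : ℕ), by omega⟩ := by
    simp only [ne_eq, Fin.mk.injEq]; omega
  have hC : (⟨(p : ℕ), by omega⟩ : Fin (2 * k)) ≠ ⟨(q : ℕ), by omega⟩ := by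
    simp only [ne_eq, Fin.mk.injEq]; omega
  have hD : (⟨(p : ℕ), by omega⟩ : Fin (2 * k)) ≠ ⟨2 * k - 1 - (q : ℕ), by omega⟩ := by
    simp only [ne_eq, Fin.mk.injEq]; omega
  simp only [antidiagWedge, wedge, sub_mul, mul_sub]
  rw [Matrix.single_mul_single_of_ne (h := hA), Matrix.single_mul_single_of_ne (h := hB),
    Matrix.single_mul_single_of_ne (h := hC), Matrix.single_mul_single_of_ne (h := hD)]
  simp

lemma aw_comm (i j : Fin k) :
    antidiagWedge k i * antidiagWedge k j = antidiagWedge k j * antidiagWedge k i := by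
  rcases eq_or_ne i j with rfl | h
  · rfl
  · have h' : (i : ℕ) ≠ (j : ℕ) := by simpa [Fin.ext_iff] using h
    rw [aw_mul_of_ne h', aw_mul_of_ne (Ne.symm h')]

end AntidiagAux

open AntidiagAux in
/-- For `n = 2k` and `M = Σ m_i · (E_i ∧ E_{n+1−i}) ∈ so(n, ℂ)` with the
`m_i` nonzero and `m_i²` pairwise distinct, the centralizer of `M` in `so(n, ℂ)` is
exactly the `k`-dimensional linear span of `E_1∧E_n, …, E_k∧E_{k+1}`; in particular
`M` is a regular element of `so(n, ℂ)`. -/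
theorem centralizer_of_antidiagonal_element (k : ℕ) (m : Fin k → ℂ)
    (hm : ∀ i, m i ≠ 0) (hm2 : Function.Injective fun i => m i ^ 2) :
    {ξ : Matrix (Fin (2 * k)) (Fin (2 * k)) ℂ | ξᵀ = -ξ ∧
        ξ * (∑ i, m i • antidiagWedge k i) = (∑ i, m i • antidiagWedge k i) * ξ}
      = ↑(Submodule.span ℂ (Set.range (antidiagWedge k))) ∧
    LinearIndependent ℂ (antidiagWedge k) := by
  constructor
  · ext ξ
    simp only [Set.mem_setOf_eq, SetLike.mem_coe, Submodule.mem_span_range_iff_exists_fun]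
    constructor
    · rintro ⟨hskew, hcomm⟩
      refine ⟨fun i => ξ ⟨(i : ℕ), by omega⟩ ⟨2 * k - 1 - (i : ℕ), by omega⟩, ?_⟩
      have hskew' : ∀ a b, ξ b a = -ξ a b := by
        intro a b
        have h := congrFun (congrFun hskew a) b
        simpa using h
      have hR : ∀ a b : Fin (2 * k), ξ a (sg b) * cc m (sg b) = cc m a * ξ (sg a) b := by
        intro a b
        have h1 := congrFun (congrFun hcomm a) b
        rwa [mul_M_apply, M_mul_apply] at h1
      have hzero : ∀ a b : Fin (2 * k), b ≠ sg a → ξ a b = 0 := by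
        intro a b hb
        by_cases hba : b = a
        · subst hba
          linear_combination (hskew' b b) / 2
        · by_contra hne
          have e1 := hR a (sg b)
          rw [sg_sg] at e1
          have e2 := hR (sg a) b
          rw [sg_sg, cc_sg, cc_sg] at e2
          have key : cc m a ^ 2 * ξ a b = cc m b ^ 2 * ξ a b := by
            linear_combination cc m a * e2 - cc m b * e1
          have hsq : cc m a ^ 2 = cc m b ^ 2 := mul_right_cancel₀ hne key
          rcases cc_sq_eq m hm2 hsq with h | h
          · exact hba (Fin.ext h)
          · exact hb (Fin.ext h)
      ext a b
      rw [sum_aw_apply]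
      have ha := a.isLt; have hb := b.isLt
      by_cases hcond : (b : ℕ) = 2 * k - 1 - (a : ℕ)
      · rw [if_pos hcond]
        simp only [cc]
        split_ifs with hak
        · show ξ ⟨(a : ℕ), by omega⟩ ⟨2 * k - 1 - (a : ℕ), by omega⟩ = ξ a b
          have e₁ : (⟨(a : ℕ), by omega⟩ : Fin (2 * k)) = a := Fin.ext rfl
          have e₂ : (⟨2 * k - 1 - (a : ℕ), by omega⟩ : Fin (2 * k)) = b :=
            Fin.ext (by simp only [Fin.val_mk]; omega)
          rw [e₁, e₂]
        · show -ξ ⟨2 * k - 1 - (a : ℕ), by omega⟩ ⟨2 * k - 1 - (2 * k - 1 - (a : ℕ)), by omega⟩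
            = ξ a b
          have e₁ : (⟨2 * k - 1 - (a : ℕ), by omega⟩ : Fin (2 * k)) = b :=
            Fin.ext (by simp only [Fin.val_mk]; omega)
          have e₂ : (⟨2 * k - 1 - (2 * k - 1 - (a : ℕ)), by omega⟩ : Fin (2 * k)) = a :=
            Fin.ext (by simp only [Fin.val_mk]; omega)
          rw [e₁, e₂, hskew' a b, neg_neg]
      · rw [if_neg hcond]
        exact (hzero a b (fun h => hcond (congrArg Fin.val h))).symm
    · rintro ⟨c, rfl⟩
      constructor
      · simp [Matrix.transpose_sum, Matrix.transpose_smul, aw_transpose]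
      · simp only [Finset.sum_mul, Finset.mul_sum, smul_mul_assoc, mul_smul_comm,
          Finset.smul_sum]
        rw [Finset.sum_comm]
        refine Finset.sum_congr rfl fun i _ => Finset.sum_congr rfl fun j _ => ?_
        rw [aw_comm, smul_comm]
  · rw [Fintype.linearIndependent_iff]
    intro g hg i
    have hik := i.isLt
    have h := congrFun (congrFun hg ⟨(i : ℕ), by omega⟩) ⟨2 * k - 1 - (i : ℕ), by omega⟩
    rw [sum_aw_apply, if_pos rfl] at h
    simp only [cc, Fin.val_mk, dif_pos hik, Fin.eta, Matrix.zero_apply] at h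
    exact h
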